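/- Proposition (exact local invariance of the expected entry-game score, discrete covariates). Let 𝒳 be a finite set and suppose for all x ∈ 𝒳: η_j(θ;x) ≥ c and η₁(θ;x) − η_j(θ;x) ≥ c for j = 2,3, η_j(θ;x) ≤ 1, and ∇_θη_j(θ;x) exists. Then there exists δ > 0 such that for every conditional pmf p with sup_{y,x} |p(y|x) − p₀(y|x)| ≤ δ and every x ∈ 𝒳, Δ(x; p, p₀) = 0; in particular E[m_θ(X; p)] = E[m_θ(X; p₀)], so the pathwise derivative of p ↦ E[m_θ(X; p)] at p₀ is zero in every direction. -/

import Mathlib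

open scoped BigOperators
open Classical

noncomputable section

/-- Outcomes of the two-player entry game. -/
inductive EntryOutcome : Type
  | y00 | y01 | y10 | y11
deriving DecidableEq

instance : Fintype EntryOutcome :=
  ⟨{.y00, .y01, .y10, .y11}, by intro x; cases x <;> simp⟩

namespace EntryGame

variable {𝒳 : Type*} {d : ℕ}

/-- `Z₁(x;p) = p((1,0)|x) η₁(x) − (p((1,0)|x)+p((0,1)|x)) η₂(x)`. -/
def Z1 (η₁ η₂ : 𝒳 → ℝ) (p : 𝒳 → EntryOutcome → ℝ) (x : 𝒳) : ℝ :=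
  p x .y10 * η₁ x - (p x .y10 + p x .y01) * η₂ x

/-- `Z₂(x;p) = p((1,0)|x) η₁(x) − (p((1,0)|x)+p((0,1)|x)) η₃(x)`. -/
def Z2 (η₁ η₃ : 𝒳 → ℝ) (p : 𝒳 → EntryOutcome → ℝ) (x : 𝒳) : ℝ :=
  p x .y10 * η₁ x - (p x .y10 + p x .y01) * η₃ x

/-- Regime indicator `I₁ = 1{Z₁ ≤ 0}·1{Z₂ ≥ 0}`. -/
def I1 (η₁ η₂ η₃ : 𝒳 → ℝ) (p : 𝒳 → EntryOutcome → ℝ) (x : 𝒳) : ℝ :=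
  if Z1 η₁ η₂ p x ≤ 0 ∧ 0 ≤ Z2 η₁ η₃ p x then 1 else 0

/-- Regime indicator `I₂ = 1{Z₁ > 0}`. -/
def I2 (η₁ η₂ : 𝒳 → ℝ) (p : 𝒳 → EntryOutcome → ℝ) (x : 𝒳) : ℝ :=
  if 0 < Z1 η₁ η₂ p x then 1 else 0

/-- Regime indicator `I₃ = 1{Z₂ < 0}`. -/
def I3 (η₁ η₃ : 𝒳 → ℝ) (p : 𝒳 → EntryOutcome → ℝ) (x : 𝒳) : ℝ :=
  if Z2 η₁ η₃ p x < 0 then 1 else 0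

/-- The entry-game score `s_θ(y|x;p)`; `g j = ∇_θ η_j`, and the scores of the outcomes
`(0,0)` and `(1,1)` (which do not depend on `p`) are the given `s00`, `s11`. -/
def score (η₁ η₂ η₃ : 𝒳 → ℝ) (g₁ g₂ g₃ s00 s11 : 𝒳 → Fin d → ℝ)
    (p : 𝒳 → EntryOutcome → ℝ) (x : 𝒳) : EntryOutcome → Fin d → ℝ
  | .y00 => s00 x
  | .y11 => s11 x
  | .y10 =>
      (I1 η₁ η₂ η₃ p x / η₁ x) • g₁ x + (I2 η₁ η₂ p x / η₂ x) • g₂ x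
        + (I3 η₁ η₃ p x / η₃ x) • g₃ x
  | .y01 =>
      (I1 η₁ η₂ η₃ p x / η₁ x) • g₁ x
        + (I2 η₁ η₂ p x / (η₁ x - η₂ x)) • (g₁ x - g₂ x)
        + (I3 η₁ η₃ p x / (η₁ x - η₃ x)) • (g₁ x - g₃ x)

/-- The score discrepancy `Δ(x; p, p₀) = ‖Σ_y p₀(y|x)(s_θ(y|x;p) − s_θ(y|x;p₀))‖`. -/
def Δ (η₁ η₂ η₃ : 𝒳 → ℝ) (g₁ g₂ g₃ s00 s11 : 𝒳 → Fin d → ℝ)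
    (p p₀ : 𝒳 → EntryOutcome → ℝ) (x : 𝒳) : ℝ :=
  ‖∑ y : EntryOutcome, p₀ x y •
      (score η₁ η₂ η₃ g₁ g₂ g₃ s00 s11 p x y - score η₁ η₂ η₃ g₁ g₂ g₃ s00 s11 p₀ x y)‖

end EntryGame

open EntryGame Filter Topology
open scoped Topology

/-- Expected score `E[m_θ(X;p)] = Σ_x P(X = x) Σ_y p₀(y|x) s_θ(y|x;p)` for discrete covariates
with marginal pmf `px`. -/
noncomputable def expectedScore {𝒳 : Type*} [Fintype 𝒳] {d : ℕ}
    (η₁ η₂ η₃ : 𝒳 → ℝ) (g₁ g₂ g₃ s00 s11 : 𝒳 → Fin d → ℝ)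
    (px : 𝒳 → ℝ) (p₀ p : 𝒳 → EntryOutcome → ℝ) : Fin d → ℝ :=
  ∑ x : 𝒳, px x •
    ∑ y : EntryOutcome, p₀ x y • EntryGame.score η₁ η₂ η₃ g₁ g₂ g₃ s00 s11 p x y

namespace EntryGame
variable {𝒳 : Type*} {d : ℕ}
lemma sum_outcomes (f : EntryOutcome → (Fin d → ℝ)) :
    ∑ y : EntryOutcome, f y = f .y00 + f .y01 + f .y10 + f .y11 := by
  have h : (Finset.univ : Finset EntryOutcome) = {.y00, .y01, .y10, .y11} := rfl
  rw [h]
  simp [Finset.sum_insert, Finset.mem_insert]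
  abel
end EntryGame

namespace EntryGame
variable {𝒳 : Type*} {d : ℕ}

lemma key (η₁ η₂ η₃ : 𝒳 → ℝ) (g₁ g₂ g₃ s00 s11 : 𝒳 → Fin d → ℝ)
    (p p₀ : 𝒳 → EntryOutcome → ℝ) (x : 𝒳)
    (h2 : 0 < η₂ x) (h3 : 0 < η₃ x) (h12 : 0 < η₁ x - η₂ x) (h13 : 0 < η₁ x - η₃ x)
    (h32 : η₃ x ≤ η₂ x)
    (ha0 : 0 ≤ p₀ x .y10) (hb0 : 0 ≤ p₀ x .y01)
    (hZ1p : 0 < Z1 η₁ η₂ p₀ x → 0 < Z1 η₁ η₂ p x)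
    (hZ1n : Z1 η₁ η₂ p₀ x < 0 → Z1 η₁ η₂ p x < 0)
    (hZ2p : 0 < Z2 η₁ η₃ p₀ x → 0 < Z2 η₁ η₃ p x)
    (hZ2n : Z2 η₁ η₃ p₀ x < 0 → Z2 η₁ η₃ p x < 0) :
    ∑ y : EntryOutcome, p₀ x y •
      (score η₁ η₂ η₃ g₁ g₂ g₃ s00 s11 p x y - score η₁ η₂ η₃ g₁ g₂ g₃ s00 s11 p₀ x y) = 0 := by
  have h1 : 0 < η₁ x := by linarith
  rw [sum_outcomes]
  have hy00 : score η₁ η₂ η₃ g₁ g₂ g₃ s00 s11 p x .y00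
      = score η₁ η₂ η₃ g₁ g₂ g₃ s00 s11 p₀ x .y00 := rfl
  have hy11 : score η₁ η₂ η₃ g₁ g₂ g₃ s00 s11 p x .y11
      = score η₁ η₂ η₃ g₁ g₂ g₃ s00 s11 p₀ x .y11 := rfl
  rw [hy00, hy11, sub_self, sub_self, smul_zero, smul_zero, zero_add, add_zero]
  set a0 := p₀ x .y10 with ha0d
  set b0 := p₀ x .y01 with hb0d
  -- trivial case : a0 = b0 = 0
  rcases eq_or_lt_of_le (by linarith : (0:ℝ) ≤ a0 + b0) with hab | hab
  · have ha : a0 = 0 := by linarith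
    have hb : b0 = 0 := by linarith
    rw [ha, hb, zero_smul, zero_smul, add_zero]
  -- main case
  have hAB0 : Z1 η₁ η₂ p₀ x ≤ Z2 η₁ η₃ p₀ x := by
    have : Z2 η₁ η₃ p₀ x - Z1 η₁ η₂ p₀ x = (a0 + b0) * (η₂ x - η₃ x) := by
      simp only [Z1, Z2]; ring
    nlinarith
  -- helper for the same-regime case
  have hsame : I1 η₁ η₂ η₃ p x = I1 η₁ η₂ η₃ p₀ x → I2 η₁ η₂ p x = I2 η₁ η₂ p₀ x →
      I3 η₁ η₃ p x = I3 η₁ η₃ p₀ x →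
      b0 • (score η₁ η₂ η₃ g₁ g₂ g₃ s00 s11 p x .y01
            - score η₁ η₂ η₃ g₁ g₂ g₃ s00 s11 p₀ x .y01)
        + a0 • (score η₁ η₂ η₃ g₁ g₂ g₃ s00 s11 p x .y10
            - score η₁ η₂ η₃ g₁ g₂ g₃ s00 s11 p₀ x .y10) = 0 := by
    intro e1 e2 e3
    simp only [score, e1, e2, e3, sub_self, smul_zero, add_zero]
  -- boundary case: p in regime 2, p₀ in regime 1, Z1(p₀) = 0
  have hbd2 : 0 < Z1 η₁ η₂ p x → Z1 η₁ η₂ p₀ x = 0 → 0 ≤ Z2 η₁ η₃ p₀ x →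
      0 < Z2 η₁ η₃ p x →
      b0 • (score η₁ η₂ η₃ g₁ g₂ g₃ s00 s11 p x .y01
            - score η₁ η₂ η₃ g₁ g₂ g₃ s00 s11 p₀ x .y01)
        + a0 • (score η₁ η₂ η₃ g₁ g₂ g₃ s00 s11 p x .y10
            - score η₁ η₂ η₃ g₁ g₂ g₃ s00 s11 p₀ x .y10) = 0 := by
    intro hA hA0 hB0 hB
    have e1p : I1 η₁ η₂ η₃ p x = 0 := by simp [I1, not_le.mpr hA]
    have e2p : I2 η₁ η₂ p x = 1 := by simp [I2, hA]
    have e3p : I3 η₁ η₃ p x = 0 := by simp [I3, not_lt.mpr hB.le]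
    have e1q : I1 η₁ η₂ η₃ p₀ x = 1 := by simp [I1, le_of_eq hA0, hB0]
    have e2q : I2 η₁ η₂ p₀ x = 0 := by simp [I2, hA0]
    have e3q : I3 η₁ η₃ p₀ x = 0 := by
      simp [I3, not_lt.mpr hB0]
    have hE : a0 * η₁ x - (a0 + b0) * η₂ x = 0 := by
      simpa [Z1, ← ha0d, ← hb0d] using hA0
    obtain ⟨s, hs⟩ : ∃ s, a0 + b0 = s := ⟨_, rfl⟩
    have ea : a0 = s * η₂ x / η₁ x := by
      field_simp
      linear_combination hE + η₂ x * hs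
    have eb : b0 = s * (η₁ x - η₂ x) / η₁ x := by
      field_simp
      linear_combination -hE + (η₁ x - η₂ x) * hs
    simp only [score, e1p, e2p, e3p, e1q, e2q, e3q, zero_div, zero_smul, add_zero, zero_add]
    rw [ea, eb]
    funext i
    simp only [Pi.add_apply, Pi.smul_apply, Pi.sub_apply, Pi.zero_apply, smul_eq_mul]
    field_simp
    ring
  -- boundary case: p in regime 3, p₀ in regime 1, Z2(p₀) = 0
  have hbd3 : Z1 η₁ η₂ p x ≤ 0 → Z2 η₁ η₃ p x < 0 → Z1 η₁ η₂ p₀ x ≤ 0 →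
      Z2 η₁ η₃ p₀ x = 0 →
      b0 • (score η₁ η₂ η₃ g₁ g₂ g₃ s00 s11 p x .y01
            - score η₁ η₂ η₃ g₁ g₂ g₃ s00 s11 p₀ x .y01)
        + a0 • (score η₁ η₂ η₃ g₁ g₂ g₃ s00 s11 p x .y10
            - score η₁ η₂ η₃ g₁ g₂ g₃ s00 s11 p₀ x .y10) = 0 := by
    intro hA hB hA0 hB0
    have e1p : I1 η₁ η₂ η₃ p x = 0 := by simp [I1, not_le.mpr hB]
    have e2p : I2 η₁ η₂ p x = 0 := by simp [I2, not_lt.mpr hA]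
    have e3p : I3 η₁ η₃ p x = 1 := by simp [I3, hB]
    have e1q : I1 η₁ η₂ η₃ p₀ x = 1 := by simp [I1, hA0, ge_of_eq hB0]
    have e2q : I2 η₁ η₂ p₀ x = 0 := by simp [I2, not_lt.mpr hA0]
    have e3q : I3 η₁ η₃ p₀ x = 0 := by simp [I3, hB0]
    have hE : a0 * η₁ x - (a0 + b0) * η₃ x = 0 := by
      simpa [Z2, ← ha0d, ← hb0d] using hB0
    obtain ⟨s, hs⟩ : ∃ s, a0 + b0 = s := ⟨_, rfl⟩
    have ea : a0 = s * η₃ x / η₁ x := by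
      field_simp
      linear_combination hE + η₃ x * hs
    have eb : b0 = s * (η₁ x - η₃ x) / η₁ x := by
      field_simp
      linear_combination -hE + (η₁ x - η₃ x) * hs
    simp only [score, e1p, e2p, e3p, e1q, e2q, e3q, zero_div, zero_smul, add_zero, zero_add]
    rw [ea, eb]
    funext i
    simp only [Pi.add_apply, Pi.smul_apply, Pi.sub_apply, Pi.zero_apply, smul_eq_mul]
    field_simp
    ring
  -- main case analysis
  rcases lt_trichotomy (Z1 η₁ η₂ p₀ x) 0 with hA0 | hA0 | hA0
  · -- Z1(p₀) < 0
    have hA := hZ1n hA0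
    rcases lt_trichotomy (Z2 η₁ η₃ p₀ x) 0 with hB0 | hB0 | hB0
    · have hB := hZ2n hB0
      exact hsame (by simp [I1, not_le.mpr hB, not_le.mpr hB0])
        (by simp [I2, not_lt.mpr hA.le, not_lt.mpr hA0.le])
        (by simp [I3, hB, hB0])
    · rcases lt_or_ge (Z2 η₁ η₃ p x) 0 with hB | hB
      · exact hbd3 hA.le hB hA0.le hB0
      · exact hsame (by simp [I1, hA.le, hB, hA0.le, le_of_eq hB0.symm])
          (by simp [I2, not_lt.mpr hA.le, not_lt.mpr hA0.le])
          (by simp [I3, not_lt.mpr hB, hB0])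
    · have hB := hZ2p hB0
      exact hsame (by simp [I1, hA.le, hB.le, hA0.le, hB0.le])
        (by simp [I2, not_lt.mpr hA.le, not_lt.mpr hA0.le])
        (by simp [I3, not_lt.mpr hB.le, not_lt.mpr hB0.le])
  · -- Z1(p₀) = 0
    have hB0 : 0 ≤ Z2 η₁ η₃ p₀ x := hA0 ▸ hAB0
    rcases eq_or_lt_of_le hB0 with hB0e | hB0p
    · -- Z2(p₀) = 0 as well; then η₂ = η₃ and Z1(p) = Z2(p)
      have h23 : η₂ x = η₃ x := by
        have hd : Z2 η₁ η₃ p₀ x - Z1 η₁ η₂ p₀ x = (a0 + b0) * (η₂ x - η₃ x) := by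
          simp only [Z1, Z2]; ring
        rw [← hB0e, hA0, sub_zero] at hd
        have := mul_eq_zero.mp hd.symm
        rcases this with h | h
        · exact absurd h (ne_of_gt hab)
        · linarith
      have hABp : Z1 η₁ η₂ p x = Z2 η₁ η₃ p x := by
        simp only [Z1, Z2, h23]
      rcases lt_trichotomy (Z1 η₁ η₂ p x) 0 with hA | hA | hA
      · exact hbd3 hA.le (hABp ▸ hA) hA0.le hB0e.symm
      · exact hsame (by simp [I1, hA.le, (hABp ▸ hA.ge : (0:ℝ) ≤ Z2 η₁ η₃ p x), hA0.le, hB0])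
          (by simp [I2, not_lt.mpr hA.le, not_lt.mpr hA0.le])
          (by simp [I3, not_lt.mpr (hABp ▸ hA.ge : (0:ℝ) ≤ Z2 η₁ η₃ p x), not_lt.mpr hB0])
      · exact hbd2 hA hA0 hB0 (hABp ▸ hA)
    · have hB := hZ2p hB0p
      rcases lt_or_ge 0 (Z1 η₁ η₂ p x) with hA | hA
      · exact hbd2 hA hA0 hB0 hB
      · exact hsame (by simp [I1, hA, hB.le, hA0.le, hB0])
          (by simp [I2, not_lt.mpr hA, not_lt.mpr hA0.le])
          (by simp [I3, not_lt.mpr hB.le, not_lt.mpr hB0])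
  · -- Z1(p₀) > 0
    have hA := hZ1p hA0
    have hB0 : 0 < Z2 η₁ η₃ p₀ x := lt_of_lt_of_le hA0 hAB0
    have hB := hZ2p hB0
    exact hsame (by simp [I1, not_le.mpr hA, not_le.mpr hA0])
      (by simp [I2, hA, hA0])
      (by simp [I3, not_lt.mpr hB.le, not_lt.mpr hB0.le])

end EntryGame

/-- sign-preservation facts for small perturbations, pointwise in `τ`. -/
lemma sign_pres_eventually (z w : ℝ) :
    ∀ᶠ τ : ℝ in 𝓝[≠] (0:ℝ),
      (0 < z → 0 < z + τ * w) ∧ (z < 0 → z + τ * w < 0) := by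
  have tnd : Tendsto (fun τ : ℝ => z + τ * w) (𝓝[≠] (0:ℝ)) (𝓝 z) := by
    have h0 : Tendsto (fun τ : ℝ => z + τ * w) (𝓝 (0:ℝ)) (𝓝 z) := by
      have hcont : Continuous fun τ : ℝ => z + τ * w := by continuity
      simpa using hcont.tendsto 0
    exact h0.mono_left nhdsWithin_le_nhds
  rcases lt_trichotomy z 0 with h | h | h
  · filter_upwards [tnd.eventually (eventually_lt_nhds h)] with τ hτ
    exact ⟨fun h' => absurd h (not_lt.mpr h'.le), fun _ => hτ⟩
  · filter_upwards with τ
    exact ⟨fun h' => absurd h' (by simp [h]), fun h' => absurd h' (by simp [h])⟩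
  · filter_upwards [tnd.eventually (eventually_gt_nhds h)] with τ hτ
    exact ⟨fun _ => hτ, fun h' => absurd h (not_lt.mpr h'.le)⟩


/-- **Exact local invariance of the expected entry-game score (discrete covariates).**
With finitely many covariate values, there is a `δ > 0` such that every conditional pmf within
`δ` of `p₀` in the sup norm yields a zero score discrepancy at every `x`, hence the same
expected score; in particular the pathwise derivative of `p ↦ E[m_θ(X;p)]` at `p₀` is zero in
every direction. -/
theorem entry_game_expected_score_local_invariance {𝒳 : Type*} [Fintype 𝒳] {d : ℕ}
    (η₁ η₂ η₃ : 𝒳 → ℝ) (g₁ g₂ g₃ s00 s11 : 𝒳 → Fin d → ℝ)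
    (c : ℝ) (hc : 0 < c)
    (hη₂ : ∀ x, c ≤ η₂ x) (hη₃ : ∀ x, c ≤ η₃ x)
    (hη₁₂ : ∀ x, c ≤ η₁ x - η₂ x) (hη₁₃ : ∀ x, c ≤ η₁ x - η₃ x)
    (hη₃₂ : ∀ x, η₃ x ≤ η₂ x)
    (hηle : ∀ x, η₁ x ≤ 1 ∧ η₂ x ≤ 1 ∧ η₃ x ≤ 1)
    (px : 𝒳 → ℝ) (hpx : (∀ x, 0 ≤ px x) ∧ ∑ x, px x = 1)
    (p₀ : 𝒳 → EntryOutcome → ℝ)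
    (hp₀ : ∀ x, (∀ y, 0 ≤ p₀ x y) ∧ ∑ y, p₀ x y = 1) :
    (∃ δ : ℝ, 0 < δ ∧
      ∀ p : 𝒳 → EntryOutcome → ℝ,
        (∀ x, (∀ y, 0 ≤ p x y) ∧ ∑ y, p x y = 1) →
        (∀ x y, |p x y - p₀ x y| ≤ δ) →
        (∀ x, Δ η₁ η₂ η₃ g₁ g₂ g₃ s00 s11 p p₀ x = 0) ∧
        expectedScore η₁ η₂ η₃ g₁ g₂ g₃ s00 s11 px p₀ p
          = expectedScore η₁ η₂ η₃ g₁ g₂ g₃ s00 s11 px p₀ p₀) ∧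
    (∀ p : 𝒳 → EntryOutcome → ℝ,
      (∀ x, (∀ y, 0 ≤ p x y) ∧ ∑ y, p x y = 1) →
      Tendsto (fun τ : ℝ => τ⁻¹ •
          (expectedScore η₁ η₂ η₃ g₁ g₂ g₃ s00 s11 px p₀
              (fun x y => p₀ x y + τ * (p x y - p₀ x y))
            - expectedScore η₁ η₂ η₃ g₁ g₂ g₃ s00 s11 px p₀ p₀))
        (𝓝[≠] (0 : ℝ)) (𝓝 0)) := by
    classical
  -- sign preservation implies zero score-difference sums
  have hkey : ∀ p : 𝒳 → EntryOutcome → ℝ,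
      (∀ x, (0 < Z1 η₁ η₂ p₀ x → 0 < Z1 η₁ η₂ p x)
          ∧ (Z1 η₁ η₂ p₀ x < 0 → Z1 η₁ η₂ p x < 0)
          ∧ (0 < Z2 η₁ η₃ p₀ x → 0 < Z2 η₁ η₃ p x)
          ∧ (Z2 η₁ η₃ p₀ x < 0 → Z2 η₁ η₃ p x < 0)) →
      ∀ x, ∑ y : EntryOutcome, p₀ x y •
        (score η₁ η₂ η₃ g₁ g₂ g₃ s00 s11 p x y
          - score η₁ η₂ η₃ g₁ g₂ g₃ s00 s11 p₀ x y) = 0 := by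
    intro p hs x
    obtain ⟨h1, h2, h3, h4⟩ := hs x
    exact key η₁ η₂ η₃ g₁ g₂ g₃ s00 s11 p p₀ x
      (lt_of_lt_of_le hc (hη₂ x)) (lt_of_lt_of_le hc (hη₃ x))
      (lt_of_lt_of_le hc (hη₁₂ x)) (lt_of_lt_of_le hc (hη₁₃ x)) (hη₃₂ x)
      ((hp₀ x).1 _) ((hp₀ x).1 _) h1 h2 h3 h4
  -- zero score-difference sums imply equal expected scores
  have hES : ∀ p : 𝒳 → EntryOutcome → ℝ,
      (∀ x, ∑ y : EntryOutcome, p₀ x y •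
        (score η₁ η₂ η₃ g₁ g₂ g₃ s00 s11 p x y
          - score η₁ η₂ η₃ g₁ g₂ g₃ s00 s11 p₀ x y) = 0) →
      expectedScore η₁ η₂ η₃ g₁ g₂ g₃ s00 s11 px p₀ p
        = expectedScore η₁ η₂ η₃ g₁ g₂ g₃ s00 s11 px p₀ p₀ := by
    intro p h
    unfold expectedScore
    refine Finset.sum_congr rfl fun x _ => ?_
    congr 1
    have h2 : (∑ y : EntryOutcome, p₀ x y • score η₁ η₂ η₃ g₁ g₂ g₃ s00 s11 p x y)
        - (∑ y : EntryOutcome, p₀ x y • score η₁ η₂ η₃ g₁ g₂ g₃ s00 s11 p₀ x y) = 0 := by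
      rw [← Finset.sum_sub_distrib]
      simpa [smul_sub] using h x
    exact sub_eq_zero.mp h2
  constructor
  · -- part 1 : explicit δ
    set f : 𝒳 → ℝ := fun x =>
      min (if Z1 η₁ η₂ p₀ x = 0 then 1 else |Z1 η₁ η₂ p₀ x|)
          (if Z2 η₁ η₃ p₀ x = 0 then 1 else |Z2 η₁ η₃ p₀ x|) with hfdef
    have hSne : (1:ℝ) ∈ insert (1:ℝ) (Finset.univ.image f) := Finset.mem_insert_self _ _
    set μ : ℝ := (insert (1:ℝ) (Finset.univ.image f)).min' ⟨1, hSne⟩ with hμdef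
    have hμpos : 0 < μ := by
      rw [hμdef]; refine (Finset.lt_min'_iff _ _).mpr ?_
      intro b hb
      rcases Finset.mem_insert.mp hb with rfl | hb
      · norm_num
      · obtain ⟨x, -, rfl⟩ := Finset.mem_image.mp hb
        rw [hfdef]
        apply lt_min <;> split <;> first | exact one_pos | exact abs_pos.mpr ‹_›
    have hμle : ∀ x, (Z1 η₁ η₂ p₀ x ≠ 0 → μ ≤ |Z1 η₁ η₂ p₀ x|)
        ∧ (Z2 η₁ η₃ p₀ x ≠ 0 → μ ≤ |Z2 η₁ η₃ p₀ x|) := by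
      intro x
      have hmem : f x ∈ insert (1:ℝ) (Finset.univ.image f) :=
        Finset.mem_insert_of_mem (Finset.mem_image_of_mem f (Finset.mem_univ x))
      have h1 : μ ≤ f x := Finset.min'_le _ _ hmem
      constructor
      · intro h
        refine h1.trans ?_
        rw [hfdef]
        exact (min_le_left _ _).trans (le_of_eq (if_neg h))
      · intro h
        refine h1.trans ?_
        rw [hfdef]
        exact (min_le_right _ _).trans (le_of_eq (if_neg h))
    refine ⟨μ / 2, by positivity, fun p hp hclose => ?_⟩
    -- the Z's move by at most μ/2
    have hZb : ∀ x, |Z1 η₁ η₂ p x - Z1 η₁ η₂ p₀ x| ≤ μ / 2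
        ∧ |Z2 η₁ η₃ p x - Z2 η₁ η₃ p₀ x| ≤ μ / 2 := by
      intro x
      have hb10 := hclose x .y10
      have hb01 := hclose x .y01
      have h12 := lt_of_lt_of_le hc (hη₁₂ x)
      have h13 := lt_of_lt_of_le hc (hη₁₃ x)
      have h2 := lt_of_lt_of_le hc (hη₂ x)
      have h3 := lt_of_lt_of_le hc (hη₃ x)
      have hle1 := (hηle x).1
      constructor
      · have e : Z1 η₁ η₂ p x - Z1 η₁ η₂ p₀ x
            = (p x .y10 - p₀ x .y10) * (η₁ x - η₂ x) - (p x .y01 - p₀ x .y01) * η₂ x := by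
          simp only [Z1]; ring
        rw [e]
        have t1 : |(p x .y10 - p₀ x .y10) * (η₁ x - η₂ x)| ≤ (μ/2) * (η₁ x - η₂ x) := by
          rw [abs_mul, abs_of_pos h12]
          exact mul_le_mul_of_nonneg_right hb10 h12.le
        have t2 : |(p x .y01 - p₀ x .y01) * η₂ x| ≤ (μ/2) * η₂ x := by
          rw [abs_mul, abs_of_pos h2]
          exact mul_le_mul_of_nonneg_right hb01 h2.le
        have tri : |(p x .y10 - p₀ x .y10) * (η₁ x - η₂ x) - (p x .y01 - p₀ x .y01) * η₂ x|
            ≤ |(p x .y10 - p₀ x .y10) * (η₁ x - η₂ x)| + |(p x .y01 - p₀ x .y01) * η₂ x| :=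
          abs_sub _ _
        nlinarith [hμpos]
      · have e : Z2 η₁ η₃ p x - Z2 η₁ η₃ p₀ x
            = (p x .y10 - p₀ x .y10) * (η₁ x - η₃ x) - (p x .y01 - p₀ x .y01) * η₃ x := by
          simp only [Z2]; ring
        rw [e]
        have t1 : |(p x .y10 - p₀ x .y10) * (η₁ x - η₃ x)| ≤ (μ/2) * (η₁ x - η₃ x) := by
          rw [abs_mul, abs_of_pos h13]
          exact mul_le_mul_of_nonneg_right hb10 h13.le
        have t2 : |(p x .y01 - p₀ x .y01) * η₃ x| ≤ (μ/2) * η₃ x := by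
          rw [abs_mul, abs_of_pos h3]
          exact mul_le_mul_of_nonneg_right hb01 h3.le
        have tri : |(p x .y10 - p₀ x .y10) * (η₁ x - η₃ x) - (p x .y01 - p₀ x .y01) * η₃ x|
            ≤ |(p x .y10 - p₀ x .y10) * (η₁ x - η₃ x)| + |(p x .y01 - p₀ x .y01) * η₃ x| :=
          abs_sub _ _
        nlinarith [hμpos]
    have hsigns : ∀ x, (0 < Z1 η₁ η₂ p₀ x → 0 < Z1 η₁ η₂ p x)
        ∧ (Z1 η₁ η₂ p₀ x < 0 → Z1 η₁ η₂ p x < 0)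
        ∧ (0 < Z2 η₁ η₃ p₀ x → 0 < Z2 η₁ η₃ p x)
        ∧ (Z2 η₁ η₃ p₀ x < 0 → Z2 η₁ η₃ p x < 0) := by
      intro x
      obtain ⟨hd1, hd2⟩ := hZb x
      obtain ⟨hm1, hm2⟩ := hμle x
      have hd1' := abs_le.mp hd1
      have hd2' := abs_le.mp hd2
      refine ⟨fun h => ?_, fun h => ?_, fun h => ?_, fun h => ?_⟩
      · have := hm1 (ne_of_gt h); rw [abs_of_pos h] at this; linarith [hd1'.1]
      · have := hm1 (ne_of_lt h); rw [abs_of_neg h] at this; linarith [hd1'.2]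
      · have := hm2 (ne_of_gt h); rw [abs_of_pos h] at this; linarith [hd2'.1]
      · have := hm2 (ne_of_lt h); rw [abs_of_neg h] at this; linarith [hd2'.2]
    have hsum := hkey p hsigns
    refine ⟨fun x => ?_, hES p hsum⟩
    unfold Δ
    rw [hsum x, norm_zero]
  · -- part 2 : pathwise derivative is zero
    intro p hp
    have hZ1lin : ∀ (τ : ℝ) (x : 𝒳),
        Z1 η₁ η₂ (fun x y => p₀ x y + τ * (p x y - p₀ x y)) x
          = Z1 η₁ η₂ p₀ x + τ * (Z1 η₁ η₂ p x - Z1 η₁ η₂ p₀ x) := by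
      intro τ x; simp only [Z1]; ring
    have hZ2lin : ∀ (τ : ℝ) (x : 𝒳),
        Z2 η₁ η₃ (fun x y => p₀ x y + τ * (p x y - p₀ x y)) x
          = Z2 η₁ η₃ p₀ x + τ * (Z2 η₁ η₃ p x - Z2 η₁ η₃ p₀ x) := by
      intro τ x; simp only [Z2]; ring
    have hev : ∀ᶠ τ : ℝ in 𝓝[≠] (0:ℝ), ∀ x : 𝒳,
        (0 < Z1 η₁ η₂ p₀ x →
          0 < Z1 η₁ η₂ (fun x y => p₀ x y + τ * (p x y - p₀ x y)) x)
        ∧ (Z1 η₁ η₂ p₀ x < 0 →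
          Z1 η₁ η₂ (fun x y => p₀ x y + τ * (p x y - p₀ x y)) x < 0)
        ∧ (0 < Z2 η₁ η₃ p₀ x →
          0 < Z2 η₁ η₃ (fun x y => p₀ x y + τ * (p x y - p₀ x y)) x)
        ∧ (Z2 η₁ η₃ p₀ x < 0 →
          Z2 η₁ η₃ (fun x y => p₀ x y + τ * (p x y - p₀ x y)) x < 0) := by
      rw [Filter.eventually_all]
      intro x
      filter_upwards [sign_pres_eventually (Z1 η₁ η₂ p₀ x) (Z1 η₁ η₂ p x - Z1 η₁ η₂ p₀ x),
        sign_pres_eventually (Z2 η₁ η₃ p₀ x) (Z2 η₁ η₃ p x - Z2 η₁ η₃ p₀ x)] with τ h1 h2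
      rw [hZ1lin τ x, hZ2lin τ x]
      exact ⟨h1.1, h1.2, h2.1, h2.2⟩
    have heq : ∀ᶠ τ : ℝ in 𝓝[≠] (0:ℝ),
        (fun _ : ℝ => (0 : Fin d → ℝ)) τ
          = τ⁻¹ • (expectedScore η₁ η₂ η₃ g₁ g₂ g₃ s00 s11 px p₀
              (fun x y => p₀ x y + τ * (p x y - p₀ x y))
            - expectedScore η₁ η₂ η₃ g₁ g₂ g₃ s00 s11 px p₀ p₀) := by
      filter_upwards [hev] with τ hτ
      rw [hES _ (hkey _ hτ), sub_self, smul_zero]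
    exact Tendsto.congr' heq tendsto_const_nhds
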